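/- Let A be a full column rank M×K complex matrix (K < M), R a Hermitian positive definite K×K matrix, σ² > 0, and Σ = A R Aᴴ + σ² I. Let U = Aᴴ Σ⁻¹ A. Then A U⁻¹ Aᴴ Σ⁻¹ = A (Aᴴ A)⁻¹ Aᴴ, and consequently Σ⁻¹ − Σ⁻¹ A U⁻¹ Aᴴ Σ⁻¹ = (1/σ²) Π⊥_A, where Π⊥_A = I − A(AᴴA)⁻¹Aᴴ. -/

import Mathlib

open Matrix ComplexOrder

/-- With `Σ = A R Aᴴ + σ² I` and `U = Aᴴ Σ⁻¹ A` (A full column rank, `R` Hermitian positive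
definite, `σ² > 0`), one has `A U⁻¹ Aᴴ Σ⁻¹ = A (Aᴴ A)⁻¹ Aᴴ` and consequently
`Σ⁻¹ − Σ⁻¹ A U⁻¹ Aᴴ Σ⁻¹ = (1/σ²) Π⊥_A`. -/
theorem noise_subspace_projection_identity {M K : ℕ} (hK : K < M)
    (A : Matrix (Fin M) (Fin K) ℂ) (hA : A.rank = K)
    (R : Matrix (Fin K) (Fin K) ℂ) (hR : R.PosDef)
    (σ2 : ℝ) (hσ : 0 < σ2)
    (S : Matrix (Fin M) (Fin M) ℂ) (hS : S = A * R * Aᴴ + (σ2 : ℂ) • 1)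
    (U : Matrix (Fin K) (Fin K) ℂ) (hU : U = Aᴴ * S⁻¹ * A) :
    A * U⁻¹ * Aᴴ * S⁻¹ = A * (Aᴴ * A)⁻¹ * Aᴴ
    ∧ S⁻¹ - S⁻¹ * A * U⁻¹ * Aᴴ * S⁻¹
        = ((σ2 : ℂ))⁻¹ • (1 - A * (Aᴴ * A)⁻¹ * Aᴴ) := by
  set G : Matrix (Fin K) (Fin K) ℂ := Aᴴ * A with hG
  set W : Matrix (Fin K) (Fin K) ℂ := R * G + (σ2 : ℂ) • 1 with hW
  have hσC : (0 : ℂ) < (σ2 : ℂ) := by exact_mod_cast hσ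
  have hσne : (σ2 : ℂ) ≠ 0 := ne_of_gt hσC
  -- S is positive definite
  have hSherm : Sᴴ = S := by
    rw [hS]
    simp [conjTranspose_add, conjTranspose_smul, conjTranspose_mul, hR.1.eq,
      Matrix.mul_assoc, Complex.star_def, Complex.conj_ofReal]
  have hSpd : S.PosDef := by
    refine posDef_iff_dotProduct_mulVec.mpr ⟨hSherm, fun x hx => ?_⟩
    have h1 : (0 : ℂ) ≤ star x ⬝ᵥ (A * R * Aᴴ) *ᵥ x :=
      (posSemidef_iff_dotProduct_mulVec.mp (hR.posSemidef.mul_mul_conjTranspose_same A)).2 x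
    have h2 : (0 : ℂ) < (σ2 : ℂ) * (star x ⬝ᵥ x) :=
      mul_pos hσC (dotProduct_star_self_pos_iff.mpr hx)
    rw [hS]
    rw [add_mulVec, dotProduct_add, smul_mulVec, one_mulVec, dotProduct_smul]
    exact add_pos_of_nonneg_of_pos h1 h2
  have hSunit : IsUnit S.det := hSpd.isUnit.map detMonoidHom
  have hSinv : S⁻¹ * S = 1 := nonsing_inv_mul S hSunit
  have hSinv' : S * S⁻¹ = 1 := mul_nonsing_inv S hSunit
  -- G = Aᴴ A is invertible
  have hGrank : G.rank = K := by rw [hG, rank_conjTranspose_mul_self, hA]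
  have hGunit : IsUnit G := by
    rw [← Matrix.mulVec_surjective_iff_isUnit]
    have : LinearMap.range G.mulVecLin = ⊤ := by
      apply Submodule.eq_top_of_finrank_eq
      rw [← Matrix.rank, hGrank]
      simp
    intro y
    have := this ▸ LinearMap.mem_range (f := G.mulVecLin) (x := y)
    exact this.symm.mpr trivial
  have hGdet : IsUnit G.det := (isUnit_iff_isUnit_det G).mp hGunit
  have hGinv : G⁻¹ * G = 1 := nonsing_inv_mul G hGdet
  have hGinv' : G * G⁻¹ = 1 := mul_nonsing_inv G hGdet
  -- key identity S A = A W
  have key1 : S * A = A * W := by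
    rw [hS, hW, hG]
    rw [Matrix.add_mul, Matrix.mul_add, Matrix.smul_mul, Matrix.one_mul, Matrix.mul_smul,
      Matrix.mul_one, Matrix.mul_assoc]
    rw [Matrix.mul_assoc]
  have key2 : S⁻¹ * (A * W) = A := by
    rw [← key1, ← Matrix.mul_assoc, hSinv, Matrix.one_mul]
  have hGherm : Gᴴ = G := by rw [hG]; simp [conjTranspose_mul]
  have hWH : Wᴴ = G * R + (σ2 : ℂ) • 1 := by
    rw [hW]
    simp [conjTranspose_add, conjTranspose_smul, conjTranspose_mul, hGherm, hR.1.eq,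
      Complex.star_def, Complex.conj_ofReal]
  have comm : G⁻¹ * Wᴴ = W * G⁻¹ := by
    rw [hWH, hW, Matrix.mul_add, Matrix.add_mul, ← Matrix.mul_assoc, hGinv,
      Matrix.one_mul, Matrix.mul_assoc, hGinv', Matrix.mul_one]
    simp [Matrix.smul_mul, Matrix.mul_smul]
  -- U⁻¹ = G⁻¹ Wᴴ
  have hUright : U * (G⁻¹ * Wᴴ) = 1 := by
    rw [comm, hU, Matrix.mul_assoc, Matrix.mul_assoc, ← Matrix.mul_assoc A W G⁻¹,
      ← Matrix.mul_assoc S⁻¹ (A * W) G⁻¹, key2, ← Matrix.mul_assoc, ← hG, hGinv']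
  have hUinv : U⁻¹ = G⁻¹ * Wᴴ := inv_eq_right_inv hUright
  -- Wᴴ Aᴴ = Aᴴ S
  have key1H : Wᴴ * Aᴴ = Aᴴ * S := by
    have := congrArg conjTranspose key1
    rw [conjTranspose_mul, conjTranspose_mul, hSherm] at this
    exact this.symm
  -- Part 1
  have part1 : A * U⁻¹ * Aᴴ * S⁻¹ = A * G⁻¹ * Aᴴ := by
    rw [hUinv]
    simp only [Matrix.mul_assoc]
    rw [← Matrix.mul_assoc Wᴴ Aᴴ S⁻¹, key1H, Matrix.mul_assoc Aᴴ S S⁻¹, hSinv',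
      Matrix.mul_one]
  refine ⟨part1, ?_⟩
  -- Part 2
  set P : Matrix (Fin M) (Fin M) ℂ := A * G⁻¹ * Aᴴ with hP
  have hAP : Aᴴ * P = Aᴴ := by
    rw [hP, ← Matrix.mul_assoc, ← Matrix.mul_assoc, ← hG, hGinv', Matrix.one_mul]
  have hSP : S * (1 - P) = (σ2 : ℂ) • (1 - P) := by
    have : S * P = A * R * Aᴴ + (σ2 : ℂ) • P := by
      rw [hS, add_mul, smul_mul, one_mul]
      congr 1
      rw [Matrix.mul_assoc (A * R) Aᴴ P, hAP]
    rw [Matrix.mul_sub, Matrix.mul_one, this, hS, smul_sub]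
    abel
  have hSinvP : S⁻¹ * (1 - P) = ((σ2 : ℂ))⁻¹ • (1 - P) := by
    have h := congrArg (fun X => S⁻¹ * X) hSP
    simp only [← Matrix.mul_assoc, hSinv, Matrix.one_mul, Matrix.mul_smul] at h
    have h2 : ((σ2 : ℂ))⁻¹ • (1 - P) = S⁻¹ * (1 - P) := by
      nth_rewrite 1 [h]
      rw [smul_smul, inv_mul_cancel₀ hσne, one_smul]
    exact h2.symm
  have : S⁻¹ - S⁻¹ * A * U⁻¹ * Aᴴ * S⁻¹ = S⁻¹ * (1 - P) := by
    rw [Matrix.mul_sub, Matrix.mul_one]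
    congr 1
    calc S⁻¹ * A * U⁻¹ * Aᴴ * S⁻¹ = S⁻¹ * (A * U⁻¹ * Aᴴ * S⁻¹) := by
          simp only [Matrix.mul_assoc]
      _ = S⁻¹ * P := by rw [part1]
  rw [this, hSinvP]
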